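/- (Existence and bound for the time derivative of the gain kernel.) Let λ̄ > 0, let λ, μ : [0,1] → ℝ be continuous with sup |λ| ≤ λ̄, let D = {(ξ,η) : 0 ≤ η ≤ ξ, ξ + η ≤ 2}, and let G : D → ℝ be the unique continuous solution of G(ξ,η) = −(1/4)∫_η^ξ λ(s/2) ds + (1/4)∫_η^ξ ∫₀^η λ((σ−s)/2) G(σ,s) ds dσ. Then the linear integral equation H(ξ,η) = −(1/4)∫_η^ξ μ(s/2) ds + (1/4)∫_η^ξ ∫₀^η [ μ((σ−s)/2)·G(σ,s) + λ((σ−s)/2)·H(σ,s) ] ds dσ has a unique continuous solution H : D → ℝ, and it satisfies sup_D |H| ≤ M · sup_{[0,1]} |μ|, where M = e^{2λ̄}·(1 + λ̄·e^{2λ̄}). -/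

import Mathlib

open MeasureTheory intervalIntegral Set Function

/-- The image of the triangle `{0 ≤ y ≤ x ≤ 1}` under `ξ = x + y`, `η = x - y`. -/
def Dtri : Set (ℝ × ℝ) := {p | 0 ≤ p.2 ∧ p.2 ≤ p.1 ∧ p.1 + p.2 ≤ 2}

namespace KTD

lemma isCompact_Dtri : IsCompact Dtri := by
  have hclosed : IsClosed Dtri := by
    have : Dtri = {p : ℝ × ℝ | 0 ≤ p.2} ∩ ({p | p.2 ≤ p.1} ∩ {p | p.1 + p.2 ≤ 2}) := rfl
    rw [this]
    exact (isClosed_le continuous_const continuous_snd).inter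
      ((isClosed_le continuous_snd continuous_fst).inter
        (isClosed_le (continuous_fst.add continuous_snd) continuous_const))
  have hsub : Dtri ⊆ (Icc (0:ℝ) 2) ×ˢ (Icc (0:ℝ) 2) := by
    rintro ⟨x, y⟩ ⟨h1, h2, h3⟩
    simp only [mem_prod, mem_Icc]
    constructor <;> constructor <;> dsimp only at * <;> linarith
  exact (isCompact_Icc.prod isCompact_Icc).of_isClosed_subset hclosed hsub

instance : CompactSpace ↥Dtri := isCompact_iff_compactSpace.mp isCompact_Dtri

/-- clamp to `[0,1]` -/
noncomputable def cl (x : ℝ) : ℝ := max 0 (min x 1)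

lemma cl_mem (x : ℝ) : cl x ∈ Icc (0:ℝ) 1 :=
  ⟨le_max_left _ _, max_le (by norm_num) (min_le_right _ _)⟩

lemma cl_cont : Continuous cl := continuous_const.max (continuous_id.min continuous_const)

lemma cl_eq {x : ℝ} (hx : x ∈ Icc (0:ℝ) 1) : cl x = x := by
  rcases hx with ⟨h0, h1⟩
  simp [cl, min_eq_left h1, max_eq_right h0]

/-- retraction onto the triangle -/
noncomputable def r (p : ℝ × ℝ) : ℝ × ℝ :=
  (max (max 0 (min p.2 1)) (min p.1 (2 - max 0 (min p.2 1))), max 0 (min p.2 1))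

lemma r_mem (p : ℝ × ℝ) : r p ∈ Dtri := by
  set η := max 0 (min p.2 1) with hη
  have h0 : 0 ≤ η := le_max_left _ _
  have h1 : η ≤ 1 := max_le (by norm_num) (min_le_right _ _)
  refine ⟨h0, le_max_left _ _, ?_⟩
  have : max η (min p.1 (2 - η)) ≤ 2 - η :=
    max_le (by linarith) (min_le_right _ _)
  simpa [r, ← hη] using by linarith [this]

lemma r_cont : Continuous r := by
  unfold r
  fun_prop

lemma r_eq {p : ℝ × ℝ} (hp : p ∈ Dtri) : r p = p := by
  obtain ⟨h1, h2, h3⟩ := hp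
  have hy1 : p.2 ≤ 1 := by linarith
  have hη : max 0 (min p.2 1) = p.2 := by rw [min_eq_left hy1, max_eq_right h1]
  have hx : p.1 ≤ 2 - p.2 := by linarith
  simp only [r, hη, min_eq_left hx, max_eq_right h2]

noncomputable def rD (p : ℝ × ℝ) : ↥Dtri := ⟨r p, r_mem p⟩

lemma rD_cont : Continuous rD := r_cont.subtype_mk _

lemma rD_coe {p : ℝ × ℝ} (hp : p ∈ Dtri) : (rD p : ℝ × ℝ) = p := r_eq hp

/-- joint continuity of the double integral -/
lemma cont_double {F : ℝ × ℝ → ℝ} (hF : Continuous F) :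
    Continuous fun p : ℝ × ℝ => ∫ σ in p.2..p.1, ∫ s in (0:ℝ)..p.2, F (σ, s) := by
  have hI : Continuous fun q : ℝ × ℝ => ∫ s in (0:ℝ)..q.2, F (q.1, s) := by
    apply intervalIntegral.continuous_parametric_intervalIntegral_of_continuous
      (f := fun (q : ℝ × ℝ) (s : ℝ) => F (q.1, s)) (μ := volume)
    · show Continuous fun q : (ℝ × ℝ) × ℝ => F (q.1.1, q.2)
      exact hF.comp (continuous_fst.fst.prodMk continuous_snd)
    · exact continuous_snd
  have hJ : ∀ c : ℝ × ℝ → ℝ, Continuous c →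
      Continuous fun p : ℝ × ℝ => ∫ σ in (0:ℝ)..(c p), ∫ s in (0:ℝ)..p.2, F (σ, s) := by
    intro c hc
    apply intervalIntegral.continuous_parametric_intervalIntegral_of_continuous
      (f := fun (p : ℝ × ℝ) (σ : ℝ) => ∫ s in (0:ℝ)..p.2, F (σ, s)) (μ := volume) _ hc
    show Continuous fun q : (ℝ × ℝ) × ℝ => ∫ s in (0:ℝ)..q.1.2, F (q.2, s)
    exact hI.comp (continuous_snd.prodMk continuous_fst.snd)
  have key : ∀ p : ℝ × ℝ, (∫ σ in p.2..p.1, ∫ s in (0:ℝ)..p.2, F (σ, s)) =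
      (∫ σ in (0:ℝ)..p.1, ∫ s in (0:ℝ)..p.2, F (σ, s)) -
      (∫ σ in (0:ℝ)..p.2, ∫ s in (0:ℝ)..p.2, F (σ, s)) := by
    intro p
    rw [intervalIntegral.integral_interval_sub_left]
    · exact ((hI.comp (continuous_id.prodMk continuous_const)).intervalIntegrable _ _ :
        IntervalIntegrable (fun σ : ℝ => ∫ s in (0:ℝ)..p.2, F (σ, s)) volume _ _)
    · exact ((hI.comp (continuous_id.prodMk continuous_const)).intervalIntegrable _ _ :
        IntervalIntegrable (fun σ : ℝ => ∫ s in (0:ℝ)..p.2, F (σ, s)) volume _ _)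
  simp only [key]
  exact (hJ _ continuous_fst).sub (hJ _ continuous_snd)

lemma cont_inner {F : ℝ × ℝ → ℝ} (hF : Continuous F) (η : ℝ) :
    Continuous fun σ : ℝ => ∫ s in (0:ℝ)..η, F (σ, s) := by
  apply intervalIntegral.continuous_parametric_intervalIntegral_of_continuous'
    (f := fun (σ : ℝ) (s : ℝ) => F (σ, s)) (μ := volume)
  show Continuous fun q : ℝ × ℝ => F (q.1, q.2)
  exact hF.comp (continuous_fst.prodMk continuous_snd)

section Op

variable {Λ : ℝ × ℝ → ℝ} {L : ℝ}

noncomputable def Kop (Λ : ℝ × ℝ → ℝ) (h : C(↥Dtri, ℝ)) : ℝ × ℝ → ℝ := fun p =>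
  (1/4) * ∫ σ in p.2..p.1, ∫ s in (0:ℝ)..p.2, Λ (σ, s) * h (rD (σ, s))

lemma FΛ_cont (hΛ : Continuous Λ) (h : C(↥Dtri, ℝ)) :
    Continuous fun p : ℝ × ℝ => Λ p * h (rD p) :=
  hΛ.mul (h.continuous.comp rD_cont)

lemma Kop_cont (hΛ : Continuous Λ) (h : C(↥Dtri, ℝ)) : Continuous (Kop Λ h) :=
  continuous_const.mul (cont_double (FΛ_cont hΛ h))

noncomputable def T (hΛ : Continuous Λ) (f₀ : C(↥Dtri, ℝ)) (h : C(↥Dtri, ℝ)) : C(↥Dtri, ℝ) :=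
  ⟨fun q => f₀ q + Kop Λ h (q : ℝ × ℝ),
    f₀.continuous.add ((Kop_cont hΛ h).comp continuous_subtype_val)⟩

lemma T_apply (hΛ : Continuous Λ) (f₀ h : C(↥Dtri, ℝ)) (q : ↥Dtri) :
    T hΛ f₀ h q = f₀ q + Kop Λ h (q : ℝ × ℝ) := rfl

lemma mem_region {ξ η σ s : ℝ} (hq : (ξ, η) ∈ Dtri) (hσ : σ ∈ Icc η ξ) (hs : s ∈ Icc 0 η) :
    (σ, s) ∈ Dtri := by
  obtain ⟨h0, h1, h2⟩ := hq
  exact ⟨hs.1, le_trans hs.2 hσ.1, by dsimp only; nlinarith [hσ.2, hs.2]⟩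

lemma Kop_bound (hΛ : Continuous Λ) (hΛb : ∀ p : ℝ × ℝ, |Λ p| ≤ L) (hL : 0 ≤ L)
    {h : C(↥Dtri, ℝ)} {c : ℝ} {n : ℕ} (hc : 0 ≤ c)
    (hb : ∀ q : ↥Dtri, |h q| ≤ c * ((q : ℝ × ℝ).1 * (q : ℝ × ℝ).2) ^ n / (n.factorial : ℝ) ^ 2) :
    ∀ q : ↥Dtri, |Kop Λ h (q : ℝ × ℝ)| ≤
      (L / 4) * c * ((q : ℝ × ℝ).1 * (q : ℝ × ℝ).2) ^ (n + 1) / ((n + 1).factorial : ℝ) ^ 2 := by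
  rintro ⟨⟨ξ, η⟩, hq⟩
  obtain ⟨h0, h1, h2⟩ := hq
  have hq' : (ξ, η) ∈ Dtri := ⟨h0, h1, h2⟩
  have hfac : (0:ℝ) < (n.factorial : ℝ) := by exact_mod_cast n.factorial_pos
  set c' : ℝ := c / (n.factorial : ℝ) ^ 2 with hc'
  have hc'0 : 0 ≤ c' := div_nonneg hc (by positivity)
  -- inner bound
  have hIb : ∀ σ ∈ Icc η ξ,
      |∫ s in (0:ℝ)..η, Λ (σ, s) * h (rD (σ, s))| ≤ L * c' * σ ^ n * (η ^ (n+1) / (n+1)) := by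
    intro σ hσ
    have hσ0 : 0 ≤ σ := le_trans h0 hσ.1
    have hcont : Continuous fun s => Λ (σ, s) * h (rD (σ, s)) :=
      (FΛ_cont hΛ h).comp (continuous_const.prodMk continuous_id)
    calc |∫ s in (0:ℝ)..η, Λ (σ, s) * h (rD (σ, s))|
        ≤ ∫ s in (0:ℝ)..η, |Λ (σ, s) * h (rD (σ, s))| :=
          intervalIntegral.abs_integral_le_integral_abs h0
      _ ≤ ∫ s in (0:ℝ)..η, (L * c' * σ ^ n) * s ^ n := by
          apply intervalIntegral.integral_mono_on h0
            (hcont.abs.intervalIntegrable _ _)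
            ((continuous_const.mul (continuous_pow n)).intervalIntegrable _ _)
          intro s hs
          have hmem := mem_region hq' hσ hs
          have hb' := hb (rD (σ, s))
          rw [rD_coe hmem] at hb'
          dsimp only at hb'
          rw [abs_mul]
          calc |Λ (σ, s)| * |h (rD (σ, s))| ≤ L * (c * (σ * s) ^ n / (n.factorial : ℝ) ^ 2) := by
                apply mul_le_mul (hΛb _) hb' (abs_nonneg _)
                exact hL
            _ = (L * c' * σ ^ n) * s ^ n := by rw [hc']; rw [mul_pow]; ring
      _ = (L * c' * σ ^ n) * (η ^ (n+1) / (n+1)) := by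
          rw [intervalIntegral.integral_const_mul, integral_pow]
          norm_num
      _ = L * c' * σ ^ n * (η ^ (n+1) / (n+1)) := by ring
  have hIcont : Continuous fun σ : ℝ => ∫ s in (0:ℝ)..η, Λ (σ, s) * h (rD (σ, s)) :=
    cont_inner (FΛ_cont hΛ h) η
  have houter :
      |∫ σ in η..ξ, ∫ s in (0:ℝ)..η, Λ (σ, s) * h (rD (σ, s))| ≤
        (L * c' * (η ^ (n+1) / (n+1))) * (ξ ^ (n+1) / (n+1)) := by
    calc |∫ σ in η..ξ, ∫ s in (0:ℝ)..η, Λ (σ, s) * h (rD (σ, s))|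
        ≤ ∫ σ in η..ξ, |∫ s in (0:ℝ)..η, Λ (σ, s) * h (rD (σ, s))| :=
          intervalIntegral.abs_integral_le_integral_abs h1
      _ ≤ ∫ σ in η..ξ, (L * c' * (η ^ (n+1) / (n+1))) * σ ^ n := by
          apply intervalIntegral.integral_mono_on h1
            (hIcont.abs.intervalIntegrable _ _)
            ((continuous_const.mul (continuous_pow n)).intervalIntegrable _ _)
          intro σ hσ
          calc |∫ s in (0:ℝ)..η, Λ (σ, s) * h (rD (σ, s))|
              ≤ L * c' * σ ^ n * (η ^ (n+1) / (n+1)) := hIb σ hσ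
            _ = (L * c' * (η ^ (n+1) / (n+1))) * σ ^ n := by ring
      _ ≤ ∫ σ in (0:ℝ)..ξ, (L * c' * (η ^ (n+1) / (n+1))) * σ ^ n := by
          have hint : ∀ a b : ℝ, IntervalIntegrable
              (fun σ : ℝ => (L * c' * (η ^ (n+1) / (n+1))) * σ ^ n) volume a b :=
            fun a b => (continuous_const.mul (continuous_pow n)).intervalIntegrable _ _
          rw [← intervalIntegral.integral_add_adjacent_intervals (hint 0 η) (hint η ξ)]
          have : 0 ≤ ∫ σ in (0:ℝ)..η, (L * c' * (η ^ (n+1) / (n+1))) * σ ^ n := by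
            apply intervalIntegral.integral_nonneg h0
            intro σ hσ
            have : 0 ≤ σ := hσ.1
            positivity
          linarith
      _ = (L * c' * (η ^ (n+1) / (n+1))) * (ξ ^ (n+1) / (n+1)) := by
          rw [intervalIntegral.integral_const_mul, integral_pow]
          norm_num
  show |(1/4) * ∫ σ in η..ξ, ∫ s in (0:ℝ)..η, Λ (σ, s) * h (rD (σ, s))| ≤ _
  rw [abs_mul]
  have hfs : ((n + 1).factorial : ℝ) = (n + 1) * (n.factorial : ℝ) := by
    exact_mod_cast Nat.factorial_succ n
  have hrhs : (L / 4) * c * (ξ * η) ^ (n + 1) / ((n + 1).factorial : ℝ) ^ 2 =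
      (1/4) * ((L * c' * (η ^ (n+1) / (n+1))) * (ξ ^ (n+1) / (n+1))) := by
    rw [hfs, hc', mul_pow]
    have hn1 : (0:ℝ) < (n:ℝ) + 1 := by positivity
    field_simp
  rw [hrhs]
  have : |(1:ℝ)/4| = 1/4 := by norm_num
  rw [this]
  apply mul_le_mul_of_nonneg_left houter (by norm_num)

lemma Kop_sub (hΛ : Continuous Λ) (u₁ u₂ : C(↥Dtri, ℝ)) (p : ℝ × ℝ) :
    Kop Λ u₁ p - Kop Λ u₂ p = Kop Λ (u₁ - u₂) p := by
  unfold Kop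
  have inner : ∀ σ : ℝ,
      (∫ s in (0:ℝ)..p.2, Λ (σ, s) * u₁ (rD (σ, s))) -
      (∫ s in (0:ℝ)..p.2, Λ (σ, s) * u₂ (rD (σ, s))) =
      ∫ s in (0:ℝ)..p.2, Λ (σ, s) * (u₁ - u₂) (rD (σ, s)) := by
    intro σ
    have c1 : Continuous fun s : ℝ => Λ (σ, s) * u₁ (rD (σ, s)) :=
      (FΛ_cont hΛ u₁).comp (continuous_const.prodMk continuous_id)
    have c2 : Continuous fun s : ℝ => Λ (σ, s) * u₂ (rD (σ, s)) :=
      (FΛ_cont hΛ u₂).comp (continuous_const.prodMk continuous_id)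
    rw [← intervalIntegral.integral_sub (c1.intervalIntegrable _ _) (c2.intervalIntegrable _ _)]
    apply intervalIntegral.integral_congr
    intro s _
    simp [ContinuousMap.sub_apply]
    ring
  rw [← mul_sub, ← intervalIntegral.integral_sub
    ((cont_inner (FΛ_cont hΛ u₁) p.2).intervalIntegrable _ _)
    ((cont_inner (FΛ_cont hΛ u₂) p.2).intervalIntegrable _ _)]
  congr 1
  apply intervalIntegral.integral_congr
  intro σ _
  exact inner σ

lemma xiEta_le_two {q : ↥Dtri} : (q : ℝ × ℝ).1 * (q : ℝ × ℝ).2 ≤ 2 ∧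
    0 ≤ (q : ℝ × ℝ).1 * (q : ℝ × ℝ).2 := by
  obtain ⟨⟨ξ, η⟩, h0, h1, h2⟩ := q
  dsimp only at *
  constructor <;> nlinarith

lemma iterate_est (hΛ : Continuous Λ) (hΛb : ∀ p : ℝ × ℝ, |Λ p| ≤ L) (hL : 0 ≤ L)
    (f₀ h₁ h₂ : C(↥Dtri, ℝ)) (n : ℕ) :
    ∀ q : ↥Dtri, |((T hΛ f₀)^[n] h₁) q - ((T hΛ f₀)^[n] h₂) q| ≤
      (dist h₁ h₂ * (L/4) ^ n) * ((q : ℝ × ℝ).1 * (q : ℝ × ℝ).2) ^ n / (n.factorial : ℝ) ^ 2 := by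
  induction n with
  | zero =>
    intro q
    simpa [Real.dist_eq] using ContinuousMap.dist_apply_le_dist (f := h₁) (g := h₂) q
  | succ n ih =>
    intro q
    rw [Function.iterate_succ_apply', Function.iterate_succ_apply']
    set u₁ := (T hΛ f₀)^[n] h₁
    set u₂ := (T hΛ f₀)^[n] h₂
    have heq : T hΛ f₀ u₁ q - T hΛ f₀ u₂ q = Kop Λ (u₁ - u₂) (q : ℝ × ℝ) := by
      rw [T_apply, T_apply]
      have := Kop_sub hΛ u₁ u₂ (q : ℝ × ℝ)
      linarith [this]
    rw [heq]
    have hb : ∀ q' : ↥Dtri, |(u₁ - u₂) q'| ≤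
        (dist h₁ h₂ * (L/4) ^ n) * ((q' : ℝ × ℝ).1 * (q' : ℝ × ℝ).2) ^ n /
          (n.factorial : ℝ) ^ 2 := by
      intro q'
      rw [ContinuousMap.sub_apply]
      exact ih q'
    have hc : 0 ≤ dist h₁ h₂ * (L/4) ^ n := by positivity
    have := Kop_bound hΛ hΛb hL hc hb q
    calc |Kop Λ (u₁ - u₂) (q : ℝ × ℝ)| ≤
        (L/4) * (dist h₁ h₂ * (L/4) ^ n) * ((q : ℝ × ℝ).1 * (q : ℝ × ℝ).2) ^ (n+1) /
          ((n+1).factorial : ℝ) ^ 2 := this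
      _ = (dist h₁ h₂ * (L/4) ^ (n+1)) * ((q : ℝ × ℝ).1 * (q : ℝ × ℝ).2) ^ (n+1) /
          ((n+1).factorial : ℝ) ^ 2 := by rw [pow_succ]; ring

lemma iterate_dist (hΛ : Continuous Λ) (hΛb : ∀ p : ℝ × ℝ, |Λ p| ≤ L) (hL : 0 ≤ L)
    (f₀ h₁ h₂ : C(↥Dtri, ℝ)) (n : ℕ) :
    dist ((T hΛ f₀)^[n] h₁) ((T hΛ f₀)^[n] h₂) ≤
      (L/2) ^ n / (n.factorial : ℝ) ^ 2 * dist h₁ h₂ := by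
  have hnn : (0:ℝ) ≤ (L/2) ^ n / (n.factorial : ℝ) ^ 2 * dist h₁ h₂ := by positivity
  rw [ContinuousMap.dist_le hnn]
  intro q
  rw [Real.dist_eq]
  refine le_trans (iterate_est hΛ hΛb hL f₀ h₁ h₂ n q) ?_
  obtain ⟨hle2, h0le⟩ := xiEta_le_two (q := q)
  have key : (dist h₁ h₂ * (L/4) ^ n) * ((q : ℝ × ℝ).1 * (q : ℝ × ℝ).2) ^ n =
      dist h₁ h₂ * (L/4 * ((q : ℝ × ℝ).1 * (q : ℝ × ℝ).2)) ^ n := by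
    rw [mul_pow]; ring
  rw [key]
  have hpow : (L/4 * ((q : ℝ × ℝ).1 * (q : ℝ × ℝ).2)) ^ n ≤ (L/2) ^ n := by
    apply pow_le_pow_left₀ (by positivity)
    nlinarith
  have hd : (0:ℝ) ≤ dist h₁ h₂ := dist_nonneg
  have hf2 : (0:ℝ) < (n.factorial : ℝ) ^ 2 := by
    have : (0:ℝ) < (n.factorial : ℝ) := by exact_mod_cast n.factorial_pos
    positivity
  have hmul : dist h₁ h₂ * (L/4 * ((q : ℝ × ℝ).1 * (q : ℝ × ℝ).2)) ^ n ≤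
      dist h₁ h₂ * (L/2) ^ n := mul_le_mul_of_nonneg_left hpow hd
  calc dist h₁ h₂ * (L/4 * ((q : ℝ × ℝ).1 * (q : ℝ × ℝ).2)) ^ n / (n.factorial : ℝ) ^ 2
      ≤ dist h₁ h₂ * (L/2) ^ n / (n.factorial : ℝ) ^ 2 := by
        gcongr
    _ = (L/2) ^ n / (n.factorial : ℝ) ^ 2 * dist h₁ h₂ := by ring

lemma T_zero (hΛ : Continuous Λ) (f₀ : C(↥Dtri, ℝ)) : T hΛ f₀ 0 = f₀ := by
  ext q
  rw [T_apply]
  have : Kop Λ 0 (q : ℝ × ℝ) = 0 := by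
    unfold Kop
    have : ∀ σ s : ℝ, Λ (σ, s) * (0 : C(↥Dtri, ℝ)) (rD (σ, s)) = 0 := by
      intro σ s; simp
    simp only [this, intervalIntegral.integral_zero, mul_zero]
  rw [this, add_zero]

lemma solve (hΛ : Continuous Λ) (hΛb : ∀ p : ℝ × ℝ, |Λ p| ≤ L) (hL : 0 ≤ L)
    (f₀ : C(↥Dtri, ℝ)) :
    ∃ x : C(↥Dtri, ℝ), T hΛ f₀ x = x ∧ ‖x‖ ≤ Real.exp (L/2) * ‖f₀‖ ∧
      ∀ y : C(↥Dtri, ℝ), T hΛ f₀ y = y → y = x := by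
  have key := iterate_dist hΛ hΛb hL f₀
  -- pick N making the iterate a contraction
  obtain ⟨N, hN⟩ : ∃ N : ℕ, (L/2) ^ N / (N.factorial : ℝ) ^ 2 < 1 := by
    have htt := FloorSemiring.tendsto_pow_div_factorial_atTop (K := ℝ) (L/2)
    have := htt.eventually (eventually_lt_nhds (show (0:ℝ) < 1 by norm_num))
    obtain ⟨N, hN⟩ := this.exists
    refine ⟨N, lt_of_le_of_lt ?_ hN⟩
    have hf1 : (1:ℝ) ≤ (N.factorial : ℝ) := by exact_mod_cast N.factorial_pos
    have hfp : (0:ℝ) < (N.factorial : ℝ) := by linarith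
    have hpow : (N.factorial : ℝ) ≤ (N.factorial : ℝ) ^ 2 := by nlinarith
    apply div_le_div_of_nonneg_left (by positivity) hfp hpow
  set KN : NNReal := Real.toNNReal ((L/2) ^ N / (N.factorial : ℝ) ^ 2) with hKN
  have hKNc : (KN : ℝ) = (L/2) ^ N / (N.factorial : ℝ) ^ 2 :=
    Real.coe_toNNReal _ (by positivity)
  have hcontr : ContractingWith KN ((T hΛ f₀)^[N]) := by
    constructor
    · rw [← NNReal.coe_lt_coe, hKNc]; exact hN
    · apply LipschitzWith.of_dist_le_mul
      intro h₁ h₂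
      rw [hKNc]
      exact key h₁ h₂ N
  set x := ContractingWith.fixedPoint ((T hΛ f₀)^[N]) hcontr with hx
  have hfix : IsFixedPt ((T hΛ f₀)^[N]) x := hcontr.fixedPoint_isFixedPt
  have hTfix : T hΛ f₀ x = x := by
    have h1 : IsFixedPt ((T hΛ f₀)^[N]) (T hΛ f₀ x) := by
      show (T hΛ f₀)^[N] (T hΛ f₀ x) = T hΛ f₀ x
      rw [← Function.iterate_succ_apply, Function.iterate_succ_apply', hfix]
    exact hcontr.fixedPoint_unique' h1 hfix
  have huniq : ∀ y : C(↥Dtri, ℝ), T hΛ f₀ y = y → y = x := by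
    intro y hy
    exact hcontr.fixedPoint_unique' (IsFixedPt.iterate hy N) hfix
  refine ⟨x, hTfix, ?_, huniq⟩
  -- the norm bound
  have hnorm : ∀ m : ℕ, ‖(T hΛ f₀)^[m] 0‖ ≤
      ‖f₀‖ * ∑ k ∈ Finset.range m, (L/2) ^ k / (k.factorial : ℝ) := by
    intro m
    induction m with
    | zero => simp
    | succ m ih =>
      have hdist : dist ((T hΛ f₀)^[m+1] 0) ((T hΛ f₀)^[m] 0) ≤
          (L/2) ^ m / (m.factorial : ℝ) * ‖f₀‖ := by
        rw [Function.iterate_succ_apply, T_zero]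
        calc dist ((T hΛ f₀)^[m] f₀) ((T hΛ f₀)^[m] 0)
            ≤ (L/2) ^ m / (m.factorial : ℝ) ^ 2 * dist f₀ 0 := key f₀ 0 m
          _ ≤ (L/2) ^ m / (m.factorial : ℝ) * ‖f₀‖ := by
              rw [dist_zero_right]
              apply mul_le_mul_of_nonneg_right ?_ (norm_nonneg _)
              have hf1 : (1:ℝ) ≤ (m.factorial : ℝ) := by exact_mod_cast m.factorial_pos
              have hfp : (0:ℝ) < (m.factorial : ℝ) := by linarith
              apply div_le_div_of_nonneg_left (by positivity) hfp (by nlinarith)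
      calc ‖(T hΛ f₀)^[m+1] 0‖ = dist ((T hΛ f₀)^[m+1] 0) 0 := (dist_zero_right _).symm
        _ ≤ dist ((T hΛ f₀)^[m+1] 0) ((T hΛ f₀)^[m] 0) + dist ((T hΛ f₀)^[m] 0) 0 :=
            dist_triangle _ _ _
        _ ≤ (L/2) ^ m / (m.factorial : ℝ) * ‖f₀‖ +
            ‖f₀‖ * ∑ k ∈ Finset.range m, (L/2) ^ k / (k.factorial : ℝ) := by
            rw [dist_zero_right]
            exact add_le_add hdist ih
        _ = ‖f₀‖ * ∑ k ∈ Finset.range (m+1), (L/2) ^ k / (k.factorial : ℝ) := by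
            rw [Finset.sum_range_succ]; ring
  have hB : ∀ m : ℕ, ‖(T hΛ f₀)^[m] 0‖ ≤ Real.exp (L/2) * ‖f₀‖ := by
    intro m
    calc ‖(T hΛ f₀)^[m] 0‖ ≤ ‖f₀‖ * ∑ k ∈ Finset.range m, (L/2) ^ k / (k.factorial : ℝ) :=
          hnorm m
      _ ≤ ‖f₀‖ * Real.exp (L/2) :=
          mul_le_mul_of_nonneg_left (Real.sum_le_exp_of_nonneg (by positivity) m) (norm_nonneg _)
      _ = Real.exp (L/2) * ‖f₀‖ := by ring
  have htend : Filter.Tendsto (fun k : ℕ => ((T hΛ f₀)^[N])^[k] 0) Filter.atTop (nhds x) :=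
    hcontr.tendsto_iterate_fixedPoint 0
  have hnorms : Filter.Tendsto (fun k : ℕ => ‖((T hΛ f₀)^[N])^[k] 0‖) Filter.atTop
      (nhds ‖x‖) := htend.norm
  apply le_of_tendsto hnorms
  filter_upwards with k
  rw [← Function.iterate_mul]
  exact hB (N * k)

lemma cont_single {g : ℝ → ℝ} (hg : Continuous g) :
    Continuous fun p : ℝ × ℝ => ∫ s in p.2..p.1, g s := by
  have hP : Continuous fun x : ℝ => ∫ s in (0:ℝ)..x, g s :=
    intervalIntegral.continuous_primitive (fun a b => hg.intervalIntegrable a b) 0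
  have key : ∀ p : ℝ × ℝ, (∫ s in p.2..p.1, g s) =
      (∫ s in (0:ℝ)..p.1, g s) - ∫ s in (0:ℝ)..p.2, g s := by
    intro p
    rw [intervalIntegral.integral_interval_sub_left (hg.intervalIntegrable _ _)
      (hg.intervalIntegrable _ _)]
  simp only [key]
  exact (hP.comp continuous_fst).sub (hP.comp continuous_snd)

lemma double_congr {q : ↥Dtri} {A B : ℝ → ℝ → ℝ}
    (hAB : ∀ σ s, σ ∈ Icc (q : ℝ × ℝ).2 (q : ℝ × ℝ).1 → s ∈ Icc 0 (q : ℝ × ℝ).2 →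
      A σ s = B σ s) :
    (∫ σ in (q : ℝ × ℝ).2..(q : ℝ × ℝ).1, ∫ s in (0:ℝ)..(q : ℝ × ℝ).2, A σ s) =
    ∫ σ in (q : ℝ × ℝ).2..(q : ℝ × ℝ).1, ∫ s in (0:ℝ)..(q : ℝ × ℝ).2, B σ s := by
  obtain ⟨⟨ξ, η⟩, h0, h1, h2⟩ := q
  dsimp only at *
  apply intervalIntegral.integral_congr
  rw [uIcc_of_le h1]
  intro σ hσ
  apply intervalIntegral.integral_congr
  rw [uIcc_of_le h0]
  intro s hs
  exact hAB σ s hσ hs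

lemma single_congr {q : ↥Dtri} {a b : ℝ → ℝ}
    (hab : ∀ s, s ∈ Icc (q : ℝ × ℝ).2 (q : ℝ × ℝ).1 → a s = b s) :
    (∫ s in (q : ℝ × ℝ).2..(q : ℝ × ℝ).1, a s) = ∫ s in (q : ℝ × ℝ).2..(q : ℝ × ℝ).1, b s := by
  obtain ⟨⟨ξ, η⟩, h0, h1, h2⟩ := q
  dsimp only at *
  apply intervalIntegral.integral_congr
  rw [uIcc_of_le h1]
  exact hab

end Op

end KTD

open KTD

/-- Existence, uniqueness and bound for the time derivative of the gain kernel: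
the linear integral equation for `H` (the integral-equation form of `k̆_t`) has a
unique continuous solution on `D`, satisfying `sup_D |H| ≤ M sup |μ|` with
`M = e^{2λ̄}(1 + λ̄ e^{2λ̄})`. -/
theorem kernel_time_derivative_existence_bound (lambdaBar : ℝ) (hlam : 0 < lambdaBar)
    (lam μ : ℝ → ℝ)
    (hlam_cont : ContinuousOn lam (Set.Icc 0 1))
    (hμ_cont : ContinuousOn μ (Set.Icc 0 1))
    (hlam_bnd : ∀ x ∈ Set.Icc (0:ℝ) 1, |lam x| ≤ lambdaBar)
    (G : ℝ × ℝ → ℝ) (hG_cont : ContinuousOn G Dtri)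
    (hG_eq : ∀ p ∈ Dtri,
      G p = -(1 / 4) * (∫ s in p.2..p.1, lam (s / 2)) +
        (1 / 4) * ∫ σ in p.2..p.1, ∫ s in (0:ℝ)..p.2, lam ((σ - s) / 2) * G (σ, s)) :
    ∃ H : ℝ × ℝ → ℝ,
      ContinuousOn H Dtri ∧
      (∀ p ∈ Dtri,
        H p = -(1 / 4) * (∫ s in p.2..p.1, μ (s / 2)) +
          (1 / 4) * ∫ σ in p.2..p.1, ∫ s in (0:ℝ)..p.2,
            (μ ((σ - s) / 2) * G (σ, s) + lam ((σ - s) / 2) * H (σ, s))) ∧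
      (∀ μBar : ℝ, (∀ x ∈ Set.Icc (0:ℝ) 1, |μ x| ≤ μBar) →
        ∀ p ∈ Dtri,
          |H p| ≤ Real.exp (2 * lambdaBar) * (1 + lambdaBar * Real.exp (2 * lambdaBar)) * μBar) ∧
      (∀ H' : ℝ × ℝ → ℝ, ContinuousOn H' Dtri →
        (∀ p ∈ Dtri,
          H' p = -(1 / 4) * (∫ s in p.2..p.1, μ (s / 2)) +
            (1 / 4) * ∫ σ in p.2..p.1, ∫ s in (0:ℝ)..p.2,
              (μ ((σ - s) / 2) * G (σ, s) + lam ((σ - s) / 2) * H' (σ, s))) →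
        Set.EqOn H H' Dtri) := by
  classical
  -- extensions
  set lamE : ℝ → ℝ := fun x => lam (cl x) with hlamE
  set μE : ℝ → ℝ := fun x => μ (cl x) with hμE
  have hlamE_cont : Continuous lamE := hlam_cont.comp_continuous cl_cont cl_mem
  have hμE_cont : Continuous μE := hμ_cont.comp_continuous cl_cont cl_mem
  have hlamE_bnd : ∀ x : ℝ, |lamE x| ≤ lambdaBar := fun x => hlam_bnd _ (cl_mem x)
  set Λ : ℝ × ℝ → ℝ := fun p => lamE ((p.1 - p.2) / 2) with hΛdef
  have hΛ : Continuous Λ := hlamE_cont.comp (by fun_prop)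
  have hΛb : ∀ p : ℝ × ℝ, |Λ p| ≤ lambdaBar := fun p => hlamE_bnd _
  have hL : (0:ℝ) ≤ lambdaBar := hlam.le
  -- region facts
  have hregion : ∀ (q : ↥Dtri) (σ s : ℝ), σ ∈ Icc (q : ℝ × ℝ).2 (q : ℝ × ℝ).1 →
      s ∈ Icc 0 (q : ℝ × ℝ).2 →
      (σ, s) ∈ Dtri ∧ (σ - s) / 2 ∈ Icc (0:ℝ) 1 := by
    rintro ⟨⟨ξ, η⟩, hq⟩ σ s hσ hs
    obtain ⟨h0, h1, h2⟩ := hq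
    have h0' : (0:ℝ) ≤ η := h0
    have h1' : η ≤ ξ := h1
    have h2' : ξ + η ≤ 2 := h2
    have hσ1' : η ≤ σ := hσ.1
    have hσ2' : σ ≤ ξ := hσ.2
    have hs1' : (0:ℝ) ≤ s := hs.1
    have hs2' : s ≤ η := hs.2
    refine ⟨mem_region ⟨h0, h1, h2⟩ hσ hs, ?_, ?_⟩
    · linarith
    · linarith
  have hhalf : ∀ (q : ↥Dtri) (s : ℝ), s ∈ Icc (q : ℝ × ℝ).2 (q : ℝ × ℝ).1 →
      s / 2 ∈ Icc (0:ℝ) 1 := by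
    rintro ⟨⟨ξ, η⟩, h0, h1, h2⟩ s hs
    dsimp only at *
    constructor <;> [linarith [hs.1]; linarith [hs.2]]
  -- the G part
  set f₀G : C(↥Dtri, ℝ) :=
    ⟨fun q => -(1/4) * ∫ s in (q : ℝ × ℝ).2..(q : ℝ × ℝ).1, lamE (s / 2),
      (continuous_const.mul ((cont_single (hlamE_cont.comp (continuous_id.div_const 2))))).comp
        continuous_subtype_val⟩ with hf₀G
  set GD : C(↥Dtri, ℝ) := ⟨Dtri.restrict G, hG_cont.restrict⟩ with hGD
  obtain ⟨xG, hfixG, hnormG, huniqG⟩ := solve hΛ hΛb hL f₀G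
  have hGfix : T hΛ f₀G GD = GD := by
    ext q
    rw [T_apply]
    show f₀G q + Kop Λ GD (q : ℝ × ℝ) = G (q : ℝ × ℝ)
    have e1 : (∫ s in (q : ℝ × ℝ).2..(q : ℝ × ℝ).1, lamE (s / 2)) =
        ∫ s in (q : ℝ × ℝ).2..(q : ℝ × ℝ).1, lam (s / 2) :=
      single_congr (fun s hs => by rw [hlamE]; dsimp only; rw [cl_eq (hhalf q s hs)])
    have e2 : (∫ σ in (q : ℝ × ℝ).2..(q : ℝ × ℝ).1, ∫ s in (0:ℝ)..(q : ℝ × ℝ).2,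
        Λ (σ, s) * GD (rD (σ, s))) =
        ∫ σ in (q : ℝ × ℝ).2..(q : ℝ × ℝ).1, ∫ s in (0:ℝ)..(q : ℝ × ℝ).2,
          lam ((σ - s) / 2) * G (σ, s) := by
      apply double_congr
      intro σ s hσ hs
      obtain ⟨hmem, hmem2⟩ := hregion q σ s hσ hs
      have hΛeq : Λ (σ, s) = lam ((σ - s) / 2) := by
        rw [hΛdef]; dsimp only; rw [hlamE]; dsimp only; rw [cl_eq hmem2]
      have hGeq : GD (rD (σ, s)) = G (σ, s) := by
        show G ((rD (σ, s)) : ℝ × ℝ) = G (σ, s)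
        rw [rD_coe hmem]
      rw [hΛeq, hGeq]
    rw [hf₀G]
    show -(1/4) * (∫ s in (q : ℝ × ℝ).2..(q : ℝ × ℝ).1, lamE (s / 2)) +
      Kop Λ GD (q : ℝ × ℝ) = G (q : ℝ × ℝ)
    unfold KTD.Kop
    rw [e1, e2, ← hG_eq (q : ℝ × ℝ) q.2]
  have hGx : GD = xG := huniqG GD hGfix
  have hf₀G_norm : ‖f₀G‖ ≤ lambdaBar / 2 := by
    rw [ContinuousMap.norm_le _ (by positivity)]
    rintro ⟨⟨ξ, η⟩, h0, h1, h2⟩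
    show ‖-(1/4) * ∫ s in η..ξ, lamE (s / 2)‖ ≤ lambdaBar / 2
    rw [norm_mul]
    have hi : ‖∫ s in η..ξ, lamE (s / 2)‖ ≤ lambdaBar * |ξ - η| :=
      intervalIntegral.norm_integral_le_of_norm_le_const
        (fun s _ => by rw [Real.norm_eq_abs]; exact hlamE_bnd _)
    have : |ξ - η| ≤ 2 := by rw [abs_of_nonneg (by linarith)]; linarith
    have : ‖∫ s in η..ξ, lamE (s / 2)‖ ≤ lambdaBar * 2 := by nlinarith
    rw [show ‖-(1/4 : ℝ)‖ = 1/4 by norm_num]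
    nlinarith
  set Gb : ℝ := Real.exp (lambdaBar / 2) * (lambdaBar / 2) with hGbdef
  have hGb0 : 0 ≤ Gb := by positivity
  have hGDnorm : ‖GD‖ ≤ Gb := by
    rw [hGx]
    refine hnormG.trans ?_
    exact mul_le_mul_of_nonneg_left hf₀G_norm (Real.exp_nonneg _)
  have hGbnd : ∀ p : ℝ × ℝ, |GD (rD p)| ≤ Gb := fun p =>
    le_trans (GD.norm_coe_le_norm (rD p)) hGDnorm
  -- the H part
  set GE : ℝ × ℝ → ℝ := fun p => GD (rD p) with hGE
  have hGE_cont : Continuous GE := GD.continuous.comp rD_cont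
  have hF1_cont : Continuous fun p : ℝ × ℝ => ∫ s in p.2..p.1, μE (s / 2) :=
    cont_single (hμE_cont.comp (continuous_id.div_const 2))
  have hF2int_cont : Continuous fun p : ℝ × ℝ => μE ((p.1 - p.2) / 2) * GE p :=
    (hμE_cont.comp (by fun_prop)).mul hGE_cont
  have hF2_cont : Continuous fun p : ℝ × ℝ =>
      ∫ σ in p.2..p.1, ∫ s in (0:ℝ)..p.2, μE ((σ - s) / 2) * GE (σ, s) :=
    cont_double hF2int_cont
  set f₀H : C(↥Dtri, ℝ) :=
    ⟨fun q => -(1/4) * (∫ s in (q : ℝ × ℝ).2..(q : ℝ × ℝ).1, μE (s / 2)) +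
        (1/4) * ∫ σ in (q : ℝ × ℝ).2..(q : ℝ × ℝ).1, ∫ s in (0:ℝ)..(q : ℝ × ℝ).2,
          μE ((σ - s) / 2) * GE (σ, s),
      ((continuous_const.mul hF1_cont).add (continuous_const.mul hF2_cont)).comp
        continuous_subtype_val⟩ with hf₀H
  obtain ⟨xH, hfixH, hnormH, huniqH⟩ := solve hΛ hΛb hL f₀H
  set H : ℝ × ℝ → ℝ := fun p => xH (rD p) with hH
  have hH_cont : Continuous H := xH.continuous.comp rD_cont
  -- the common computation
  have form : ∀ (W : ℝ × ℝ → ℝ) (xW : C(↥Dtri, ℝ)),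
      (∀ p (hp : p ∈ Dtri), W p = xW ⟨p, hp⟩) → ∀ q : ↥Dtri,
      f₀H q + Kop Λ xW (q : ℝ × ℝ) =
        -(1 / 4) * (∫ s in (q : ℝ × ℝ).2..(q : ℝ × ℝ).1, μ (s / 2)) +
          (1 / 4) * ∫ σ in (q : ℝ × ℝ).2..(q : ℝ × ℝ).1, ∫ s in (0:ℝ)..(q : ℝ × ℝ).2,
            (μ ((σ - s) / 2) * G (σ, s) + lam ((σ - s) / 2) * W (σ, s)) := by
    intro W xW hW q
    have e1 : (∫ s in (q : ℝ × ℝ).2..(q : ℝ × ℝ).1, μE (s / 2)) =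
        ∫ s in (q : ℝ × ℝ).2..(q : ℝ × ℝ).1, μ (s / 2) :=
      single_congr (fun s hs => by rw [hμE]; dsimp only; rw [cl_eq (hhalf q s hs)])
    have e2 : (∫ σ in (q : ℝ × ℝ).2..(q : ℝ × ℝ).1, ∫ s in (0:ℝ)..(q : ℝ × ℝ).2,
        (μ ((σ - s) / 2) * G (σ, s) + lam ((σ - s) / 2) * W (σ, s))) =
        ∫ σ in (q : ℝ × ℝ).2..(q : ℝ × ℝ).1, ∫ s in (0:ℝ)..(q : ℝ × ℝ).2,
          (μE ((σ - s) / 2) * GE (σ, s) + Λ (σ, s) * xW (rD (σ, s))) := by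
      apply double_congr
      intro σ s hσ hs
      obtain ⟨hmem, hmem2⟩ := hregion q σ s hσ hs
      have h1 : μ ((σ - s) / 2) = μE ((σ - s) / 2) := by
        rw [hμE]; dsimp only; rw [cl_eq hmem2]
      have h2 : G (σ, s) = GE (σ, s) := by
        rw [hGE]; show G (σ, s) = G ((rD (σ, s)) : ℝ × ℝ); rw [rD_coe hmem]
      have h3 : lam ((σ - s) / 2) = Λ (σ, s) := by
        rw [hΛdef]; dsimp only; rw [hlamE]; dsimp only; rw [cl_eq hmem2]
      have h4 : W (σ, s) = xW (rD (σ, s)) := by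
        rw [hW (σ, s) hmem]
        congr 1
        exact Subtype.ext (rD_coe hmem).symm
      rw [h1, h2, h3, h4]
    have e3 : (∫ σ in (q : ℝ × ℝ).2..(q : ℝ × ℝ).1, ∫ s in (0:ℝ)..(q : ℝ × ℝ).2,
        (μE ((σ - s) / 2) * GE (σ, s) + Λ (σ, s) * xW (rD (σ, s)))) =
        (∫ σ in (q : ℝ × ℝ).2..(q : ℝ × ℝ).1, ∫ s in (0:ℝ)..(q : ℝ × ℝ).2,
          μE ((σ - s) / 2) * GE (σ, s)) +
        ∫ σ in (q : ℝ × ℝ).2..(q : ℝ × ℝ).1, ∫ s in (0:ℝ)..(q : ℝ × ℝ).2,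
          Λ (σ, s) * xW (rD (σ, s)) := by
      have hc1 : ∀ σ : ℝ, Continuous fun s : ℝ => μE ((σ - s) / 2) * GE (σ, s) :=
        fun σ => hF2int_cont.comp (continuous_const.prodMk continuous_id)
      have hc2 : ∀ σ : ℝ, Continuous fun s : ℝ => Λ (σ, s) * xW (rD (σ, s)) :=
        fun σ => (FΛ_cont hΛ xW).comp (continuous_const.prodMk continuous_id)
      have inner : ∀ σ : ℝ, (∫ s in (0:ℝ)..(q : ℝ × ℝ).2,
          (μE ((σ - s) / 2) * GE (σ, s) + Λ (σ, s) * xW (rD (σ, s)))) =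
          (∫ s in (0:ℝ)..(q : ℝ × ℝ).2, μE ((σ - s) / 2) * GE (σ, s)) +
          ∫ s in (0:ℝ)..(q : ℝ × ℝ).2, Λ (σ, s) * xW (rD (σ, s)) := fun σ =>
        intervalIntegral.integral_add ((hc1 σ).intervalIntegrable _ _)
          ((hc2 σ).intervalIntegrable _ _)
      rw [intervalIntegral.integral_congr (g := fun σ =>
          (∫ s in (0:ℝ)..(q : ℝ × ℝ).2, μE ((σ - s) / 2) * GE (σ, s)) +
          ∫ s in (0:ℝ)..(q : ℝ × ℝ).2, Λ (σ, s) * xW (rD (σ, s))) (fun σ _ => inner σ)]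
      exact intervalIntegral.integral_add
        ((cont_inner hF2int_cont _).intervalIntegrable _ _)
        ((cont_inner (FΛ_cont hΛ xW) _).intervalIntegrable _ _)
    rw [e2, e3]
    show -(1/4) * (∫ s in (q : ℝ × ℝ).2..(q : ℝ × ℝ).1, μE (s / 2)) +
        (1/4) * (∫ σ in (q : ℝ × ℝ).2..(q : ℝ × ℝ).1, ∫ s in (0:ℝ)..(q : ℝ × ℝ).2,
          μE ((σ - s) / 2) * GE (σ, s)) + Kop Λ xW (q : ℝ × ℝ) = _
    unfold KTD.Kop
    rw [e1]
    ring
  refine ⟨H, hH_cont.continuousOn, ?_, ?_, ?_⟩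
  · -- the integral equation
    intro p hp
    have h1 : H p = xH ⟨p, hp⟩ := by rw [hH]; dsimp only; congr 1; exact Subtype.ext (r_eq hp)
    have h2 := form H xH (fun p' hp' => by
      rw [hH]; dsimp only; congr 1; exact Subtype.ext (r_eq hp')) ⟨p, hp⟩
    rw [h1, ← hfixH]
    rw [T_apply]
    exact h2
  · -- the bound
    intro μBar hμb p hp
    have hμB0 : 0 ≤ μBar := le_trans (abs_nonneg _) (hμb 0 ⟨le_refl _, zero_le_one⟩)
    have hμEb : ∀ x : ℝ, |μE x| ≤ μBar := fun x => hμb _ (cl_mem x)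
    have hf₀H_norm : ‖f₀H‖ ≤ μBar / 2 + μBar * Gb / 2 := by
      rw [ContinuousMap.norm_le _ (by positivity)]
      rintro ⟨⟨ξ, η⟩, h0, h1, h2⟩
      show ‖-(1/4) * (∫ s in η..ξ, μE (s / 2)) + (1/4) * ∫ σ in η..ξ, ∫ s in (0:ℝ)..η,
        μE ((σ - s) / 2) * GE (σ, s)‖ ≤ μBar / 2 + μBar * Gb / 2
      have hξη : |ξ - η| ≤ 2 := by rw [abs_of_nonneg (by linarith)]; linarith
      have t1 : ‖-(1/4) * ∫ s in η..ξ, μE (s / 2)‖ ≤ μBar / 2 := by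
        rw [norm_mul, show ‖-(1/4 : ℝ)‖ = 1/4 by norm_num]
        have hi : ‖∫ s in η..ξ, μE (s / 2)‖ ≤ μBar * |ξ - η| :=
          intervalIntegral.norm_integral_le_of_norm_le_const
            (fun s _ => by rw [Real.norm_eq_abs]; exact hμEb _)
        nlinarith
      have t2 : ‖(1/4) * ∫ σ in η..ξ, ∫ s in (0:ℝ)..η, μE ((σ - s) / 2) * GE (σ, s)‖ ≤
          μBar * Gb / 2 := by
        rw [norm_mul, show ‖(1/4 : ℝ)‖ = 1/4 by norm_num]
        have hinner : ∀ σ : ℝ, ‖∫ s in (0:ℝ)..η, μE ((σ - s) / 2) * GE (σ, s)‖ ≤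
            μBar * Gb * 1 := by
          intro σ
          have : ‖∫ s in (0:ℝ)..η, μE ((σ - s) / 2) * GE (σ, s)‖ ≤ (μBar * Gb) * |η - 0| := by
            apply intervalIntegral.norm_integral_le_of_norm_le_const
            intro s _
            rw [Real.norm_eq_abs, abs_mul]
            exact mul_le_mul (hμEb _) (hGbnd _) (abs_nonneg _) hμB0
          refine this.trans ?_
          rw [sub_zero, abs_of_nonneg h0]
          have hη1 : η ≤ 1 := by
            have h1' : η ≤ ξ := h1
            have h2' : ξ + η ≤ 2 := h2
            linarith
          exact mul_le_mul_of_nonneg_left hη1 (mul_nonneg hμB0 hGb0)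
        have houter : ‖∫ σ in η..ξ, ∫ s in (0:ℝ)..η, μE ((σ - s) / 2) * GE (σ, s)‖ ≤
            (μBar * Gb * 1) * |ξ - η| :=
          intervalIntegral.norm_integral_le_of_norm_le_const (fun σ _ => hinner σ)
        have hchain : (μBar * Gb * 1) * |ξ - η| ≤ μBar * Gb * 2 := by
          have := mul_le_mul_of_nonneg_left hξη (mul_nonneg hμB0 hGb0)
          nlinarith
        linarith [houter.trans hchain, norm_nonneg
          (∫ σ in η..ξ, ∫ s in (0:ℝ)..η, μE ((σ - s) / 2) * GE (σ, s))]
      calc ‖-(1/4) * (∫ s in η..ξ, μE (s / 2)) + (1/4) * ∫ σ in η..ξ, ∫ s in (0:ℝ)..η,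
            μE ((σ - s) / 2) * GE (σ, s)‖ ≤
          ‖-(1/4) * ∫ s in η..ξ, μE (s / 2)‖ +
          ‖(1/4) * ∫ σ in η..ξ, ∫ s in (0:ℝ)..η, μE ((σ - s) / 2) * GE (σ, s)‖ :=
            norm_add_le _ _
        _ ≤ μBar / 2 + μBar * Gb / 2 := add_le_add t1 t2
    have hHp : |H p| ≤ Real.exp (lambdaBar / 2) * (μBar / 2 + μBar * Gb / 2) := by
      calc |H p| = ‖xH (rD p)‖ := by simp only [hH, Real.norm_eq_abs]
        _ ≤ ‖xH‖ := xH.norm_coe_le_norm _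
        _ ≤ Real.exp (lambdaBar / 2) * ‖f₀H‖ := hnormH
        _ ≤ Real.exp (lambdaBar / 2) * (μBar / 2 + μBar * Gb / 2) :=
            mul_le_mul_of_nonneg_left hf₀H_norm (Real.exp_nonneg _)
    refine hHp.trans ?_
    have hE1 : Real.exp (lambdaBar / 2) ≤ Real.exp (2 * lambdaBar) :=
      Real.exp_le_exp.mpr (by linarith)
    have hE1p : (0:ℝ) < Real.exp (lambdaBar / 2) := Real.exp_pos _
    have hE2p : (0:ℝ) < Real.exp (2 * lambdaBar) := Real.exp_pos _
    rw [hGbdef]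
    have ha : Real.exp (lambdaBar / 2) * Real.exp (lambdaBar / 2) ≤
        Real.exp (2 * lambdaBar) * Real.exp (2 * lambdaBar) :=
      mul_le_mul hE1 hE1 hE1p.le hE2p.le
    have hb : μBar * Real.exp (lambdaBar / 2) ≤ μBar * Real.exp (2 * lambdaBar) :=
      mul_le_mul_of_nonneg_left hE1 hμB0
    have hc : (μBar * lambdaBar) * (Real.exp (lambdaBar / 2) * Real.exp (lambdaBar / 2)) ≤
        (μBar * lambdaBar) * (Real.exp (2 * lambdaBar) * Real.exp (2 * lambdaBar)) :=
      mul_le_mul_of_nonneg_left ha (mul_nonneg hμB0 hL)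
    have hd : 0 ≤ μBar * Real.exp (2 * lambdaBar) := mul_nonneg hμB0 hE2p.le
    have he : 0 ≤ μBar * lambdaBar * (Real.exp (2 * lambdaBar) * Real.exp (2 * lambdaBar)) :=
      mul_nonneg (mul_nonneg hμB0 hL) (mul_nonneg hE2p.le hE2p.le)
    nlinarith [hb, hc, hd, he]
  · -- uniqueness
    intro H' hH'c hH'eq
    set H'D : C(↥Dtri, ℝ) := ⟨Dtri.restrict H', hH'c.restrict⟩ with hH'D
    have hfix' : T hΛ f₀H H'D = H'D := by
      ext q
      rw [T_apply]
      have := form H' H'D (fun p' hp' => rfl) q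
      rw [this]
      exact (hH'eq (q : ℝ × ℝ) q.2).symm
    have : H'D = xH := huniqH H'D hfix'
    intro p hp
    have h1 : H p = xH ⟨p, hp⟩ := by rw [hH]; dsimp only; congr 1; exact Subtype.ext (r_eq hp)
    rw [h1, ← this]
    rfl
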